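/- arXiv:2105.04312 — 3 statements merged into one kernel-verified Lean document; each statement's English description precedes it below -/
import Mathlib

section
/- Let X ⊂ ℝⁿ be an open, bounded convex set, α ≥ 0, and a : X → ℝ a function with 0 < inf_X a ≤ sup_X a < ∞. Then the measure f with density a·d_{∂X}^α with respect to Lebesgue measure satisfies: there is a constant C ≥ 1, depending only on n, α, inf_X a, and sup_X a, such that ∫_𝔈 f ≤ C ∫_{½𝔈} f for every ellipsoid 𝔈 whose center lies in the closure of X. -/
open MeasureTheory Metric Set Filter Topology
open scoped RealInnerProductSpace ENNReal NNReal

noncomputable section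
open scoped Classical

abbrev E (n : ℕ) := EuclideanSpace ℝ (Fin n)

/-- Center of mass of a set. -/
def centerOfMass {n : ℕ} (S : Set (E n)) : E n :=
  (volume S).toReal⁻¹ • ∫ x in S, x

/-- Dilation of `S` by factor `t` about the point `z`. -/
def dilate {n : ℕ} (z : E n) (t : ℝ) (S : Set (E n)) : Set (E n) :=
  (fun x => z + t • (x - z)) '' S

/-- Support of a measure. -/
def msupport {n : ℕ} (f : Measure (E n)) : Set (E n) :=
  {x | ∀ r > 0, 0 < f (Metric.ball x r)}

/-- `f` is doubling on bounded convex domains with constant `C`. -/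
def DoublingOnConvex {n : ℕ} (f : Measure (E n)) (C : ℝ) : Prop :=
  1 ≤ C ∧ ∀ S : Set (E n), IsOpen S → Bornology.IsBounded S → Convex ℝ S → S.Nonempty →
    centerOfMass S ∈ msupport f →
    f S ≤ ENNReal.ofReal C * f (dilate (centerOfMass S) (1 / 2) S)

/-- `T` pushes the measure `f` forward to `g`. -/
def Pushforward {n : ℕ} (T : E n → E n) (f g : Measure (E n)) : Prop :=
  ∀ φ : E n → ℝ, Measurable φ → (∃ M, ∀ y, |φ y| ≤ M) →
    ∫ x, φ (T x) ∂f = ∫ y, φ y ∂g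

/-- Subdifferential of `u` at `x`. -/
def subgrad {n : ℕ} (u : E n → ℝ) (x : E n) : Set (E n) :=
  {p | ∀ z, u x + ⟪p, z - x⟫ ≤ u z}

/-- Image of a set under the subdifferential. -/
def subgradImage {n : ℕ} (u : E n → ℝ) (B : Set (E n)) : Set (E n) :=
  ⋃ x ∈ B, subgrad u x

/-- `S` is a centered section of `u` at `z` with height `h`, with defining affine
function `x ↦ ⟪p, x⟫ + c`. -/
def IsCenteredSectionWith {n : ℕ} (u : E n → ℝ) (z : E n) (h : ℝ) (S : Set (E n))
    (p : E n) (c : ℝ) : Prop :=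
  ⟪p, z⟫ + c = u z + h ∧ S = {x | u x < ⟪p, x⟫ + c} ∧
    Bornology.IsBounded S ∧ centerOfMass S = z

/-- `S` is a centered section of `u` at `z` with height `h`. -/
def IsCenteredSection {n : ℕ} (u : E n → ℝ) (z : E n) (h : ℝ) (S : Set (E n)) : Prop :=
  ∃ p c, IsCenteredSectionWith u z h S p c

/-- An ellipsoid centered at `z`. -/
def IsEllipsoid {n : ℕ} (z : E n) (S : Set (E n)) : Prop :=
  ∃ M : Matrix (Fin n) (Fin n) ℝ, M.PosDef ∧
    S = (fun v => z + Matrix.toEuclideanLin M v) '' Metric.ball (0 : E n) 1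

/-- Distance to the boundary, positive inside `X` and zero outside. -/
def bdist {n : ℕ} (X : Set (E n)) (x : E n) : ℝ :=
  if x ∈ X then Metric.infDist x (frontier X) else 0

/-- The measure with density `a · d_{∂X}^α` with respect to Lebesgue measure. -/
def powerDensityMeasure {n : ℕ} (X : Set (E n)) (a : E n → ℝ) (α : ℝ) : Measure (E n) :=
  volume.withDensity fun x => if x ∈ X then ENNReal.ofReal (a x * bdist X x ^ α) else 0

lemma lintegral_comp_halfdilate {n : ℕ} (z : E n) {H : E n → ℝ≥0∞} (hH : Measurable H) :
    ∫⁻ x, H (z + (1/2 : ℝ) • (x - z)) ∂volume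
      = ENNReal.ofReal (2 ^ n) * ∫⁻ y, H y ∂volume := by
  have h2 : |(((1/2:ℝ)) ^ n)⁻¹| = 2 ^ n := by
    rw [abs_of_pos (by positivity), ← inv_pow]
    norm_num
  calc ∫⁻ x, H (z + (1/2:ℝ) • (x - z)) ∂volume
      = ∫⁻ x, (fun u => H (z + (1/2:ℝ) • u)) (x + -z) ∂volume := by
        simp [sub_eq_add_neg]
    _ = ∫⁻ u, H (z + (1/2:ℝ) • u) ∂volume :=
        lintegral_add_right_eq_self (fun u => H (z + (1/2:ℝ) • u)) (-z)
    _ = ∫⁻ u, (fun v => H (z + v)) ((1/2:ℝ) • u) ∂volume := rfl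
    _ = ∫⁻ v, H (z + v) ∂(Measure.map ((1/2:ℝ) • ·) volume) :=
        (lintegral_map (by exact hH.comp (measurable_const_add z))
          (measurable_const_smul _)).symm
    _ = ENNReal.ofReal (2 ^ n) * ∫⁻ v, H (z + v) ∂volume := by
        rw [Measure.map_addHaar_smul volume (by norm_num : (1/2:ℝ) ≠ 0)]
        rw [lintegral_smul_measure]
        congr 2
        rw [finrank_euclideanSpace_fin, h2]
    _ = ENNReal.ofReal (2 ^ n) * ∫⁻ y, H y ∂volume := by
        rw [lintegral_add_left_eq_self]

lemma half_dilate_mem_and_dist {n : ℕ} {X : Set (E n)} (hXopen : IsOpen X)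
    (hXconv : Convex ℝ X) {z : E n} (hz : z ∈ closure X) {x : E n} (hx : x ∈ X) :
    z + (1/2 : ℝ) • (x - z) ∈ X ∧
      Metric.infDist x (frontier X) ≤
        2 * Metric.infDist (z + (1/2 : ℝ) • (x - z)) (frontier X) := by
  set m : E n := z + (1/2 : ℝ) • (x - z) with hm
  have hcombo : ∀ w ∈ X, (1/2 : ℝ) • w + (1/2 : ℝ) • z ∈ X := by
    intro w hw
    have := hXconv.combo_interior_closure_mem_interior
      (by rwa [hXopen.interior_eq] : w ∈ interior X) hz
      (by norm_num : (0:ℝ) < 1/2) (by norm_num : (0:ℝ) ≤ 1/2) (by norm_num)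
    rwa [hXopen.interior_eq] at this
  have hmem : m ∈ X := by
    have := hcombo x hx
    have he : m = (1/2 : ℝ) • x + (1/2 : ℝ) • z := by rw [hm]; module
    rwa [he]
  refine ⟨hmem, ?_⟩
  by_cases huniv : X = univ
  · simp [huniv]
  · have hcne : Xᶜ.Nonempty := nonempty_compl.2 huniv
    have heq : ∀ w ∈ X, Metric.infDist w (frontier X) = Metric.infDist w Xᶜ := by
      intro w hw
      obtain ⟨y, hyf, hyd⟩ := exists_mem_frontier_infDist_compl_eq_dist hw huniv
      refine le_antisymm ?_ ?_
      · rw [hyd]; exact Metric.infDist_le_dist_of_mem hyf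
      · calc Metric.infDist w Xᶜ = Metric.infDist w (closure Xᶜ) :=
              Metric.infDist_closure.symm
          _ ≤ Metric.infDist w (frontier X) :=
              Metric.infDist_le_infDist_of_subset
                (by rw [frontier_eq_closure_inter_closure]; exact inter_subset_right)
                ⟨y, hyf⟩
    set r := Metric.infDist x Xᶜ with hr
    have hball : ball x r ⊆ X := Metric.ball_infDist_compl_subset
    have hclaim : ∀ y ∈ Xᶜ, r / 2 ≤ dist m y := by
      intro y hy
      by_contra hcon
      push_neg at hcon
      have hw : x + (2:ℝ) • (y - m) ∈ X := by
        apply hball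
        rw [mem_ball, dist_eq_norm]
        have he : x + (2:ℝ) • (y - m) - x = (2:ℝ) • (y - m) := by module
        rw [he, norm_smul]
        have : ‖y - m‖ = dist m y := by rw [dist_comm, dist_eq_norm]
        rw [this]
        simp only [Real.norm_ofNat]
        linarith
      have hyX : y ∈ X := by
        have := hcombo _ hw
        have he : (1/2 : ℝ) • (x + (2:ℝ) • (y - m)) + (1/2 : ℝ) • z = y := by
          rw [hm]; module
        rwa [he] at this
      exact hy hyX
    have : r / 2 ≤ Metric.infDist m Xᶜ := by
      rw [Metric.infDist_eq_iInf]
      have := hcne.to_subtype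
      exact le_ciInf fun y => hclaim y y.2
    rw [heq x hx, heq m hmem]
    linarith

/-- **Powers of the distance function are doubling on ellipsoids.** (Lemma 2.6.)
If `X` is open, bounded and convex, `α ≥ 0` and `0 < ia ≤ a ≤ sa < ∞` on `X`,
then the measure `f = a·d_{∂X}^α` satisfies `f(𝔈) ≤ C f(½𝔈)` for every ellipsoid `𝔈`
centered in `closure X`, with `C` depending only on `n`, `α`, `ia`, `sa`. -/
theorem power_density_doubling_on_ellipsoids (n : ℕ) (α ia sa : ℝ)
    (hα : 0 ≤ α) (hia : 0 < ia) (hsa : ia ≤ sa) :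
    ∃ C : ℝ, 1 ≤ C ∧
      ∀ (X : Set (E n)) (a : E n → ℝ),
        IsOpen X → Bornology.IsBounded X → Convex ℝ X → X.Nonempty →
        (∀ x ∈ X, ia ≤ a x ∧ a x ≤ sa) →
        ∀ (z : E n) (𝔈 : Set (E n)), IsEllipsoid z 𝔈 → z ∈ closure X →
          powerDensityMeasure X a α 𝔈 ≤
            ENNReal.ofReal C * powerDensityMeasure X a α (dilate z (1 / 2) 𝔈) := by
  have hsa0 : 0 < sa := lt_of_lt_of_le hia hsa
  refine ⟨(sa / ia) * 2 ^ ((n : ℝ) + α), ?_, ?_⟩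
  · have h1 : (1:ℝ) ≤ sa / ia := (one_le_div hia).2 hsa
    have h2 : (1:ℝ) ≤ 2 ^ ((n:ℝ) + α) := Real.one_le_rpow one_le_two (by positivity)
    nlinarith
  intro X a hXopen hXbd hXconv hXne ha z 𝔈 hell hz
  set T : E n → E n := fun x => z + (1/2 : ℝ) • (x - z) with hTdef
  set f := powerDensityMeasure X a α with hf
  set D : E n → ℝ≥0∞ := fun x => if x ∈ X then ENNReal.ofReal (a x * bdist X x ^ α) else 0
    with hD
  set G : E n → ℝ≥0∞ :=
    fun x => if x ∈ X then ENNReal.ofReal (Metric.infDist x (frontier X) ^ α) else 0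
    with hG
  have hGmeas : Measurable G := by
    have h1 : Continuous fun x : E n => Metric.infDist x (frontier X) ^ α :=
      (Real.continuous_rpow_const hα).comp (continuous_infDist_pt (frontier X))
    exact Measurable.ite hXopen.measurableSet
      (ENNReal.continuous_ofReal.comp h1).measurable measurable_const
  have hTmeas : Measurable T :=
    by rw [hTdef]; fun_prop
  have hbd : ∀ x ∈ X, bdist X x = Metric.infDist x (frontier X) := fun x hx => if_pos hx
  have hptw1 : ∀ x, D x ≤ ENNReal.ofReal sa * G x := by
    intro x
    by_cases hx : x ∈ X
    · simp only [hD, hG, if_pos hx, hbd x hx]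
      rw [← ENNReal.ofReal_mul hsa0.le]
      exact ENNReal.ofReal_le_ofReal
        (mul_le_mul_of_nonneg_right (ha x hx).2
          (Real.rpow_nonneg Metric.infDist_nonneg α))
    · simp [hD, hG, if_neg hx]
  have hptw2 : ∀ x, ENNReal.ofReal ia * G x ≤ D x := by
    intro x
    by_cases hx : x ∈ X
    · simp only [hD, hG, if_pos hx, hbd x hx]
      rw [← ENNReal.ofReal_mul hia.le]
      exact ENNReal.ofReal_le_ofReal
        (mul_le_mul_of_nonneg_right (ha x hx).1
          (Real.rpow_nonneg Metric.infDist_nonneg α))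
    · simp [hD, hG, if_neg hx]
  have hptw3 : ∀ x, G x ≤ ENNReal.ofReal (2 ^ α) * G (T x) := by
    intro x
    by_cases hx : x ∈ X
    · obtain ⟨hTx, hd⟩ := half_dilate_mem_and_dist hXopen hXconv hz hx
      have hTx' : T x ∈ X := hTx
      simp only [hG, if_pos hx, if_pos hTx']
      rw [← ENNReal.ofReal_mul (by positivity)]
      apply ENNReal.ofReal_le_ofReal
      have h0 : (0:ℝ) ≤ Metric.infDist (T x) (frontier X) := Metric.infDist_nonneg
      calc Metric.infDist x (frontier X) ^ α
          ≤ (2 * Metric.infDist (T x) (frontier X)) ^ α :=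
            Real.rpow_le_rpow Metric.infDist_nonneg hd hα
        _ = 2 ^ α * Metric.infDist (T x) (frontier X) ^ α :=
            Real.mul_rpow (by norm_num) h0
    · simp [hG, if_neg hx]
  set A := toMeasurable f (T '' 𝔈) with hA
  have hAm : MeasurableSet A := measurableSet_toMeasurable f _
  have hBm : MeasurableSet (T ⁻¹' A) := hTmeas hAm
  have hsub : 𝔈 ⊆ T ⁻¹' A := fun x hx => subset_toMeasurable f _ (mem_image_of_mem T hx)
  have hdil : dilate z (1 / 2) 𝔈 = T '' 𝔈 := rfl
  have hsubst : ∫⁻ x in T ⁻¹' A, G (T x) ∂volume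
      = ENNReal.ofReal (2 ^ n) * ∫⁻ y in A, G y ∂volume := by
    rw [← lintegral_indicator hBm]
    have hind : ∀ x, (T ⁻¹' A).indicator (fun x => G (T x)) x = (A.indicator G) (T x) := by
      intro x
      by_cases h : T x ∈ A <;> simp [Set.indicator, mem_preimage, h]
    calc ∫⁻ x, (T ⁻¹' A).indicator (fun x => G (T x)) x ∂volume
        = ∫⁻ x, (A.indicator G) (T x) ∂volume := lintegral_congr hind
      _ = ENNReal.ofReal (2 ^ n) * ∫⁻ y, A.indicator G y ∂volume :=
          lintegral_comp_halfdilate z (hGmeas.indicator hAm)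
      _ = ENNReal.ofReal (2 ^ n) * ∫⁻ y in A, G y ∂volume := by
          rw [lintegral_indicator hAm]
  have hc : ENNReal.ofReal sa * ENNReal.ofReal (2 ^ α) * ENNReal.ofReal ((2:ℝ) ^ n)
      = ENNReal.ofReal (sa / ia * 2 ^ ((n:ℝ) + α)) * ENNReal.ofReal ia := by
    rw [← ENNReal.ofReal_mul (by positivity), ← ENNReal.ofReal_mul (by positivity),
      ← ENNReal.ofReal_mul (by positivity)]
    congr 1
    rw [Real.rpow_add two_pos, Real.rpow_natCast]
    field_simp
  have hlast : ENNReal.ofReal ia * ∫⁻ y in A, G y ∂volume ≤ f (dilate z (1 / 2) 𝔈) := by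
    calc ENNReal.ofReal ia * ∫⁻ y in A, G y ∂volume
        = ∫⁻ y in A, ENNReal.ofReal ia * G y ∂volume := (lintegral_const_mul _ hGmeas).symm
      _ ≤ ∫⁻ y in A, D y ∂volume := lintegral_mono fun y => hptw2 y
      _ = f A := by rw [hf, powerDensityMeasure, withDensity_apply _ hAm]
      _ = f (T '' 𝔈) := measure_toMeasurable _
      _ = f (dilate z (1 / 2) 𝔈) := by rw [hdil]
  calc f 𝔈 ≤ f (T ⁻¹' A) := measure_mono hsub
    _ = ∫⁻ x in T ⁻¹' A, D x ∂volume := by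
        rw [hf, powerDensityMeasure, withDensity_apply _ hBm]
    _ ≤ ∫⁻ x in T ⁻¹' A, ENNReal.ofReal sa * G x ∂volume := lintegral_mono fun x => hptw1 x
    _ = ENNReal.ofReal sa * ∫⁻ x in T ⁻¹' A, G x ∂volume := lintegral_const_mul _ hGmeas
    _ ≤ ENNReal.ofReal sa *
        ∫⁻ x in T ⁻¹' A, ENNReal.ofReal (2 ^ α) * G (T x) ∂volume :=
        mul_le_mul_right (lintegral_mono fun x => hptw3 x) _
    _ = ENNReal.ofReal sa * (ENNReal.ofReal (2 ^ α) * ∫⁻ x in T ⁻¹' A, G (T x) ∂volume) := by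
        rw [lintegral_const_mul' _ _ ENNReal.ofReal_ne_top]
    _ = ENNReal.ofReal sa * ENNReal.ofReal (2 ^ α) * ENNReal.ofReal ((2:ℝ) ^ n) *
        ∫⁻ y in A, G y ∂volume := by rw [hsubst]; ring
    _ = ENNReal.ofReal (sa / ia * 2 ^ ((n:ℝ) + α)) *
        (ENNReal.ofReal ia * ∫⁻ y in A, G y ∂volume) := by rw [hc]; ring
    _ ≤ ENNReal.ofReal (sa / ia * 2 ^ ((n:ℝ) + α)) * f (dilate z (1 / 2) 𝔈) :=
        mul_le_mul_right hlast _
end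
end

section
/- Let u : ℝⁿ → ℝ be convex, z ∈ ℝⁿ, h > 0, and let S_h^c(z) be a centered section of u at z with height h. If z₁ and z₂ are two opposite points on ∂S_h^c(z), i.e., z₂ = z + l(z − z₁) for some l > 0, then n^{−3/2} ≤ l ≤ n^{3/2}. -/
open MeasureTheory Metric Set Filter Topology
open scoped RealInnerProductSpace ENNReal NNReal

noncomputable section
open scoped Classical

namespace CSAux

variable {n : ℕ}

/-- Cone comparison / layer cake bound on the average of a linear functional over an open
bounded convex set. -/
lemma avg_bound (hn : 1 ≤ n) {K : Set (E n)} (hKo : IsOpen K)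
    (hKb : Bornology.IsBounded K) (hKc : Convex ℝ K) (hKne : K.Nonempty)
    (f : E n →L[ℝ] ℝ) {q : E n} (hq : q ∈ closure K) {H : ℝ}
    (hqmin : ∀ x ∈ closure K, f q ≤ f x) (hHmax : ∀ x ∈ closure K, f x ≤ H) :
    ((n : ℝ) + 1) * ∫ x in K, f x ≤ ((n : ℝ) * H + f q) * (volume K).toReal := by
  have hcpt : IsCompact (closure K) := hKb.isCompact_closure
  set m := f q with hm
  set V := (volume K).toReal with hV
  have hVfin : volume K < ∞ := hKb.measure_lt_top
  have hVpos : 0 < V := ENNReal.toReal_pos (hKo.measure_pos volume hKne).ne' hVfin.ne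
  have hKm : MeasurableSet K := hKo.measurableSet
  have hint : IntegrableOn (fun x => f x) K volume :=
    (f.continuous.continuousOn.integrableOn_compact hcpt).mono_set subset_closure
  have hconst : IntegrableOn (fun _ : E n => m) K volume :=
    integrableOn_const hVfin.ne
  have hgint : IntegrableOn (fun x => f x - m) K volume := hint.sub hconst
  have hw0 : 0 ≤ H - m := sub_nonneg.2 (hHmax q hq)
  have heqsub : ∫ x in K, (f x - m) = (∫ x in K, f x) - m * V := by
    rw [integral_sub hint hconst, setIntegral_const, smul_eq_mul, measureReal_def]
    ring
  have key : ((n : ℝ) + 1) * ∫ x in K, (f x - m) ≤ (n : ℝ) * (H - m) * V := by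
    rcases hw0.lt_or_eq with hw | hw
    · -- main case `m < H`
      set w := H - m with hwdef
      set g := fun x : E n => f x - m with hg
      have g_meas : Measurable g := (f.continuous.measurable).sub measurable_const
      have g_nn : 0 ≤ᵐ[volume.restrict K] g :=
        ae_restrict_of_forall_mem hKm fun x hx => sub_nonneg.2 (hqmin x (subset_closure hx))
      have layer := hgint.integral_eq_integral_meas_lt g_nn
      set G : ℝ → ℝ := fun t => ((volume.restrict K) {a | t < g a}).toReal with hG
      have hres : ∀ t : ℝ, (volume.restrict K) {a | t < g a} = volume ({a | t < g a} ∩ K) :=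
        fun t => Measure.restrict_apply (measurableSet_lt measurable_const g_meas)
      have hGfin : ∀ t : ℝ, (volume.restrict K) {a | t < g a} ≠ ∞ := by
        intro t
        rw [hres]
        exact (lt_of_le_of_lt (measure_mono inter_subset_right) hVfin).ne
      have G_anti : Antitone G := by
        intro t₁ t₂ hle
        exact ENNReal.toReal_mono (hGfin t₁)
          (measure_mono fun a ha => lt_of_le_of_lt hle ha)
      have G_nonneg : ∀ t, 0 ≤ G t := fun t => ENNReal.toReal_nonneg
      have G_le_V : ∀ t, G t ≤ V := by
        intro t
        rw [hG]
        simp only [hres]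
        exact ENNReal.toReal_mono hVfin.ne (measure_mono inter_subset_right)
      have Gzero : ∀ t, w ≤ t → G t = 0 := by
        intro t hwt
        have : {a | t < g a} ∩ K = ∅ := by
          ext x
          simp only [mem_inter_iff, mem_setOf_eq, mem_empty_iff_false, iff_false, not_and]
          intro hgx hxK
          have : g x ≤ w := sub_le_sub_right (hHmax x (subset_closure hxK)) m
          linarith
        rw [hG]
        simp only [hres, this, measure_empty, ENNReal.toReal_zero]
      have Gbound : ∀ t ∈ Ioc (0:ℝ) w, G t ≤ (1 - (t / w) ^ n) * V := by
        intro t ht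
        set s := t / w with hsdef
        have hs0 : 0 < s := div_pos ht.1 hw
        have hs1 : s ≤ 1 := (div_le_one hw).2 ht.2
        rcases lt_or_ge t w with hwt | hwt
        · have hs1' : s < 1 := (div_lt_one hw).2 hwt
          set T := AffineMap.homothety q s with hT
          have hTapp : ∀ x : E n, T x = (1 - s) • q + s • x := by
            intro x
            rw [hT, AffineMap.homothety_apply]
            simp only [vsub_eq_sub, vadd_eq_add, smul_sub]
            module
          have hTK : T '' K ⊆ K := by
            rintro _ ⟨x, hx, rfl⟩
            rw [hTapp, ← hKo.interior_eq]
            exact hKc.combo_closure_interior_mem_interior hq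
              (by rwa [hKo.interior_eq]) (by linarith) hs0 (by ring)
          have hsub : {a | t < g a} ∩ K ⊆ K \ T '' K := by
            rintro x ⟨hxg, hxK⟩
            refine ⟨hxK, ?_⟩
            rintro ⟨y, hy, rfl⟩
            simp only [mem_setOf_eq] at hxg
            have hfy : f y - m ≤ w := sub_le_sub_right (hHmax y (subset_closure hy)) m
            have hfx : g (T y) = s * (f y - m) := by
              rw [hTapp]
              have hlin : f ((1 - s) • q + s • y) = (1 - s) * f q + s * f y := by
                rw [f.map_add, f.map_smul, f.map_smul, smul_eq_mul, smul_eq_mul]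
              simp only [hg, hlin, hm]
              ring
            have hle : g (T y) ≤ t := by
              rw [hfx]
              calc s * (f y - m) ≤ s * w := by
                    exact mul_le_mul_of_nonneg_left hfy hs0.le
                _ = t := by rw [hsdef, div_mul_cancel₀ t hw.ne']
            linarith
          have hTopen : IsOpen (T '' K) := by
            have h1 : IsOpen ((fun x : E n => s • x) '' K) := (isOpenMap_smul₀ hs0.ne') _ hKo
            have h2 : IsOpen ((fun y : E n => y + ((1 - s) • q)) '' ((fun x : E n => s • x) '' K)) :=
              (Homeomorph.addRight ((1 - s) • q)).isOpenMap _ h1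
            have heq : T '' K = (fun y : E n => y + ((1 - s) • q)) '' ((fun x : E n => s • x) '' K) := by
              rw [Set.image_image]
              apply Set.image_congr'
              intro x
              rw [hTapp]
              module
            rw [heq]
            exact h2
          have hTvol : volume (T '' K) = ENNReal.ofReal (s ^ n) * volume K := by
            rw [hT, Measure.addHaar_image_homothety]
            congr 2
            rw [finrank_euclideanSpace_fin]
            exact abs_of_nonneg (pow_nonneg hs0.le n)
          have hTvol_le : volume (T '' K) ≤ volume K := by
            rw [hTvol]
            calc ENNReal.ofReal (s ^ n) * volume K ≤ 1 * volume K := by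
                  exact mul_le_mul_of_nonneg_right (ENNReal.ofReal_le_one.2 (pow_le_one₀ hs0.le hs1)) (zero_le')
              _ = volume K := one_mul _
          have hdiff : volume (K \ T '' K) = volume K - volume (T '' K) :=
            measure_diff hTK hTopen.measurableSet.nullMeasurableSet
              (lt_of_le_of_lt hTvol_le hVfin).ne
          have hvol_le : volume ({a | t < g a} ∩ K) ≤ volume K - volume (T '' K) := by
            rw [← hdiff]
            exact measure_mono hsub
          have htoReal : (volume K - volume (T '' K)).toReal = (1 - s ^ n) * V := by
            have hofle : ENNReal.ofReal (s ^ n) * volume K ≤ volume K := hTvol ▸ hTvol_le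
            rw [hTvol, ENNReal.toReal_sub_of_le hofle hVfin.ne]
            rw [ENNReal.toReal_mul, ENNReal.toReal_ofReal (pow_nonneg hs0.le n)]
            ring
          calc G t = (volume ({a | t < g a} ∩ K)).toReal := by rw [hG]; simp only [hres]
            _ ≤ (volume K - volume (T '' K)).toReal :=
                ENNReal.toReal_mono
                  ((tsub_le_self.trans_lt hVfin).ne) hvol_le
            _ = (1 - s ^ n) * V := htoReal
        · rw [Gzero t hwt]
          have : s ^ n ≤ 1 := pow_le_one₀ hs0.le hs1
          have := hVpos.le
          nlinarith
      -- integrate the bound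
      have hG1 : IntegrableOn G (Ioc (0:ℝ) w) volume := by
        have hcV : IntegrableOn (fun _ : ℝ => V) (Ioc (0:ℝ) w) volume :=
          integrableOn_const measure_Ioc_lt_top.ne
        refine Integrable.mono' hcV
          G_anti.measurable.aestronglyMeasurable (ae_of_all _ fun t => ?_)
        rw [Real.norm_eq_abs, abs_of_nonneg (G_nonneg t)]
        exact G_le_V t
      have hG2 : IntegrableOn G (Ioi w) volume := by
        have h0 : IntegrableOn (fun _ : ℝ => (0:ℝ)) (Ioi w) volume := integrableOn_zero
        exact h0.congr_fun (fun t ht => (Gzero t (le_of_lt ht)).symm) measurableSet_Ioi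
      have hIoi : ∫ t in Ioi (0:ℝ), G t = ∫ t in Ioc (0:ℝ) w, G t := by
        rw [← Ioc_union_Ioi_eq_Ioi hw.le,
          setIntegral_union (Ioc_disjoint_Ioi le_rfl) measurableSet_Ioi hG1 hG2]
        have hz : ∫ t in Ioi w, G t = 0 := by
          rw [setIntegral_congr_fun measurableSet_Ioi fun t ht => Gzero t (le_of_lt ht)]
          exact integral_zero _ _
        rw [hz, add_zero]
      have hcont_int : IntegrableOn (fun t : ℝ => (1 - (t / w) ^ n) * V) (Ioc (0:ℝ) w) volume := by
        exact Continuous.integrableOn_Ioc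
          ((continuous_const.sub ((continuous_id.div_const w).pow n)).mul continuous_const)
      have hmono : ∫ t in Ioc (0:ℝ) w, G t ≤ ∫ t in Ioc (0:ℝ) w, (1 - (t / w) ^ n) * V :=
        setIntegral_mono_on hG1 hcont_int measurableSet_Ioc Gbound
      have hcomp : ∫ t in Ioc (0:ℝ) w, (1 - (t / w) ^ n) * V = (w - w / ((n:ℝ) + 1)) * V := by
        rw [← intervalIntegral.integral_of_le hw.le]
        have hrw : ∀ t : ℝ, (1 - (t / w) ^ n) * V = V - (V / w ^ n) * t ^ n := by
          intro t
          rw [div_pow]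
          ring
        simp_rw [hrw]
        rw [intervalIntegral.integral_sub intervalIntegrable_const
          ((intervalIntegral.intervalIntegrable_pow n).const_mul _),
          intervalIntegral.integral_const,
          intervalIntegral.integral_const_mul, integral_pow]
        have hwne : w ≠ 0 := hw.ne'
        have hn1 : ((n:ℝ) + 1) ≠ 0 := by positivity
        field_simp
        ring
      have hfinal : ∫ x in K, (f x - m) ≤ (w - w / ((n:ℝ) + 1)) * V := by
        rw [layer]
        calc ∫ t in Ioi (0:ℝ), G t = ∫ t in Ioc (0:ℝ) w, G t := hIoi
          _ ≤ ∫ t in Ioc (0:ℝ) w, (1 - (t / w) ^ n) * V := hmono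
          _ = (w - w / ((n:ℝ) + 1)) * V := hcomp
      have hn1 : (0:ℝ) < (n:ℝ) + 1 := by positivity
      have hmul : ((n:ℝ) + 1) * ((w - w / ((n:ℝ) + 1)) * V) = (n:ℝ) * w * V := by
        have hne : ((n:ℝ) + 1) ≠ 0 := by positivity
        field_simp
        try ring
        try tauto
      calc ((n : ℝ) + 1) * ∫ x in K, (f x - m)
          ≤ ((n:ℝ) + 1) * ((w - w / ((n:ℝ) + 1)) * V) := by
            exact mul_le_mul_of_nonneg_left hfinal hn1.le
        _ = (n:ℝ) * w * V := hmul
    · -- degenerate case `H = m`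
      have hHm : H = m := by linarith
      have hzero : ∫ x in K, (f x - m) = 0 := by
        rw [setIntegral_congr_fun hKm (g := fun _ => (0:ℝ)) ?_, integral_zero]
        intro x hx
        have h1 := hqmin x (subset_closure hx)
        have h2 := hHmax x (subset_closure hx)
        simp only
        linarith
      rw [hzero, ← hw]
      ring_nf
      positivity
  -- combine
  rw [heqsub] at key
  nlinarith [key]

end CSAux

namespace CSAux2
open CSAux

variable {n : ℕ}

/-- Minkowski-type reflection: the reflection of any closure point about the center of mass,
scaled by `1/n`, stays in the closure. -/
lemma reflect_mem_closure (hn : 1 ≤ n) {K : Set (E n)} (hKo : IsOpen K)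
    (hKb : Bornology.IsBounded K) (hKc : Convex ℝ K) (hKne : K.Nonempty)
    {p : E n} (hp : p ∈ closure K) :
    centerOfMass K + (n : ℝ)⁻¹ • (centerOfMass K - p) ∈ closure K := by
  by_contra hy
  obtain ⟨f, r, hfr, hry⟩ := geometric_hahn_banach_closed_point hKc.closure isClosed_closure hy
  have hcpt : IsCompact (closure K) := hKb.isCompact_closure
  have hclne : (closure K).Nonempty := hKne.closure
  obtain ⟨q, hq, hqmin⟩ := hcpt.exists_isMinOn hclne f.continuous.continuousOn
  have hqmin' : ∀ x ∈ closure K, f q ≤ f x := fun x hx => isMinOn_iff.mp hqmin x hx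
  set H := sSup (f '' closure K) with hH
  have hbddA : BddAbove (f '' closure K) := (hcpt.image f.continuous).bddAbove
  have hHmax : ∀ x ∈ closure K, f x ≤ H := fun x hx => le_csSup hbddA ⟨x, hx, rfl⟩
  have havg := avg_bound hn hKo hKb hKc hKne f hq hqmin' hHmax
  set z := centerOfMass K with hz
  set V := (volume K).toReal with hV
  have hVfin : volume K < ∞ := hKb.measure_lt_top
  have hVpos : 0 < V := ENNReal.toReal_pos (hKo.measure_pos volume hKne).ne' hVfin.ne
  have hid : IntegrableOn (fun x : E n => x) K volume :=
    (continuous_id.continuousOn.integrableOn_compact hcpt).mono_set subset_closure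
  have hfz : f z = V⁻¹ * ∫ x in K, f x := by
    rw [hz]
    unfold centerOfMass
    rw [_root_.map_smul, ← f.integral_comp_comm hid, smul_eq_mul, ← hV]
  have hintf : ∫ x in K, f x = V * f z := by
    rw [hfz]
    field_simp
  rw [hintf] at havg
  have h1 : ((n:ℝ) + 1) * f z ≤ (n:ℝ) * H + f q := by
    have h1' : (((n:ℝ) + 1) * f z) * V ≤ ((n:ℝ) * H + f q) * V := by
      calc (((n:ℝ) + 1) * f z) * V = ((n:ℝ) + 1) * (V * f z) := by ring
        _ ≤ ((n:ℝ) * H + f q) * V := havg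
    exact le_of_mul_le_mul_right h1' hVpos
  have hHr : H ≤ r :=
    csSup_le (hclne.image f) (by rintro _ ⟨x, hx, rfl⟩; exact (hfr x hx).le)
  have hfy : f (z + (n:ℝ)⁻¹ • (z - p)) = f z + (n:ℝ)⁻¹ * (f z - f p) := by
    rw [f.map_add, _root_.map_smul, f.map_sub, smul_eq_mul]
  have hnpos : (0:ℝ) < n := by exact_mod_cast hn
  have h2 : r < f z + (n:ℝ)⁻¹ * (f z - f p) := by rw [← hfy]; exact hry
  have hqp : f q ≤ f p := hqmin' p hp
  have h3 : H < f z + (n:ℝ)⁻¹ * (f z - f q) := by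
    have hmono : (n:ℝ)⁻¹ * (f z - f p) ≤ (n:ℝ)⁻¹ * (f z - f q) :=
      mul_le_mul_of_nonneg_left (by linarith) (by positivity)
    calc H ≤ r := hHr
      _ < f z + (n:ℝ)⁻¹ * (f z - f p) := h2
      _ ≤ f z + (n:ℝ)⁻¹ * (f z - f q) := by linarith
  have h4 : (n:ℝ) * H < ((n:ℝ) + 1) * f z - f q := by
    have := mul_lt_mul_of_pos_left h3 hnpos
    have hexp : (n:ℝ) * (f z + (n:ℝ)⁻¹ * (f z - f q)) = ((n:ℝ) + 1) * f z - f q := by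
      field_simp
      ring
    linarith [hexp ▸ this]
  linarith

/-- Half of the balancedness estimate. -/
lemma half (hn : 1 ≤ n) {K : Set (E n)} (hKo : IsOpen K) (hKb : Bornology.IsBounded K)
    (hKc : Convex ℝ K) {z z₁ z₂ : E n} (hzK : z ∈ K) (hcm : centerOfMass K = z)
    (hz₁ : z₁ ∈ closure K) (hz₂ : z₂ ∈ frontier K) {l : ℝ} (hl : 0 < l)
    (hopp : z₂ = z + l • (z - z₁)) : (n:ℝ)⁻¹ ≤ l := by
  by_contra hcon
  push_neg at hcon
  have hKne : K.Nonempty := ⟨z, hzK⟩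
  have hy := reflect_mem_closure hn hKo hKb hKc hKne hz₁
  rw [hcm] at hy
  have hnpos : (0:ℝ) < n := by exact_mod_cast hn
  set s := l * n with hs
  have hs0 : 0 < s := mul_pos hl hnpos
  have hs1 : s < 1 := by
    calc s = l * n := hs
      _ < (n:ℝ)⁻¹ * n := by exact mul_lt_mul_of_pos_right hcon hnpos
      _ = 1 := inv_mul_cancel₀ hnpos.ne'
  have hcombo : z₂ = (1 - s) • z + s • (z + (n:ℝ)⁻¹ • (z - z₁)) := by
    rw [hopp]
    match_scalars <;> field_simp [hs] <;> ring
  have hintz : z₂ ∈ interior K := by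
    rw [hcombo]
    exact hKc.combo_interior_closure_mem_interior (by rwa [hKo.interior_eq]) hy
      (by linarith) hs0.le (by ring)
  rw [hKo.frontier_eq] at hz₂
  rw [hKo.interior_eq] at hintz
  exact hz₂.2 hintz

end CSAux2


/-- **Centered sections are balanced.** (Lemma 2.8.)  If `S` is a centered section of a
convex function `u` at `z` with height `h`, and `z₁`, `z₂` are opposite points of `∂S`,
i.e. `z₂ = z + l(z − z₁)` with `l > 0`, then `n^{-3/2} ≤ l ≤ n^{3/2}`. -/
theorem centered_sections_balanced (n : ℕ) (u : E n → ℝ) (z : E n) (h : ℝ)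
    (S : Set (E n)) (hu : ConvexOn ℝ Set.univ u) (hh : 0 < h)
    (hS : IsCenteredSection u z h S)
    (z₁ z₂ : E n) (hz₁ : z₁ ∈ frontier S) (hz₂ : z₂ ∈ frontier S)
    (l : ℝ) (hl : 0 < l) (hopp : z₂ = z + l • (z - z₁)) :
    (n : ℝ) ^ (-(3 : ℝ) / 2) ≤ l ∧ l ≤ (n : ℝ) ^ ((3 : ℝ) / 2) := by
  obtain ⟨p, c, hpc, hSdef, hSbd, hScm⟩ := hS
  have hzS : z ∈ S := by
    rw [hSdef]
    show u z < ⟪p, z⟫ + c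
    linarith [hpc]
  rcases Nat.eq_zero_or_pos n with rfl | hn
  · exfalso
    haveI : Subsingleton (E 0) := ⟨fun a b => PiLp.ext fun i => Fin.elim0 i⟩
    have hSuniv : S = Set.univ := Set.eq_univ_of_forall fun x => Subsingleton.elim z x ▸ hzS
    rw [hSuniv, frontier_univ] at hz₁
    exact hz₁
  · have hucont : Continuous u := continuousOn_univ.mp (hu.continuousOn isOpen_univ)
    have hlcont : Continuous fun x : E n => ⟪p, x⟫ + c :=
      (continuous_const.inner continuous_id).add continuous_const
    have hSo : IsOpen S := by rw [hSdef]; exact isOpen_lt hucont hlcont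
    have hF : ConvexOn ℝ Set.univ (fun x : E n => u x - (⟪p, x⟫ + c)) := by
      refine ⟨convex_univ, fun x _ y _ a b ha hb hab => ?_⟩
      have h1 := hu.2 (Set.mem_univ x) (Set.mem_univ y) ha hb hab
      have h2 : ⟪p, a • x + b • y⟫ = a * ⟪p, x⟫ + b * ⟪p, y⟫ := by
        rw [inner_add_right, real_inner_smul_right, real_inner_smul_right]
      have h3 : a * c + b * c = c := by rw [← add_mul, hab, one_mul]
      simp only [smul_eq_mul] at h1 ⊢
      rw [h2]
      linarith [h1]
    have hSc : Convex ℝ S := by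
      have hconv := hF.convex_lt 0
      have hEq : S = {x ∈ Set.univ | u x - (⟪p, x⟫ + c) < 0} := by
        rw [hSdef]
        ext x
        simp [sub_neg]
      rw [hEq]
      exact hconv
    have h1 : (n:ℝ)⁻¹ ≤ l :=
      CSAux2.half hn hSo hSbd hSc hzS hScm (frontier_subset_closure hz₁) hz₂ hl hopp
    have hopp' : z₁ = z + l⁻¹ • (z - z₂) := by
      rw [hopp]
      match_scalars <;> field_simp <;> ring
    have h2 : (n:ℝ)⁻¹ ≤ l⁻¹ :=
      CSAux2.half hn hSo hSbd hSc hzS hScm (frontier_subset_closure hz₂) hz₁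
        (inv_pos.2 hl) hopp'
    have hnpos : (0:ℝ) < n := by exact_mod_cast hn
    have hln : l ≤ (n:ℝ) := by
      calc l = (l⁻¹)⁻¹ := (inv_inv l).symm
        _ ≤ ((n:ℝ)⁻¹)⁻¹ := inv_anti₀ (inv_pos.2 hnpos) h2
        _ = (n:ℝ) := inv_inv _
    have hn1 : (1:ℝ) ≤ (n:ℝ) := by exact_mod_cast hn
    constructor
    · calc (n : ℝ) ^ (-(3 : ℝ) / 2) ≤ (n:ℝ) ^ (-1 : ℝ) :=
            Real.rpow_le_rpow_of_exponent_le hn1 (by norm_num)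
        _ = (n:ℝ)⁻¹ := Real.rpow_neg_one _
        _ ≤ l := h1
    · calc l ≤ (n:ℝ) := hln
        _ = (n:ℝ) ^ (1 : ℝ) := (Real.rpow_one _).symm
        _ ≤ (n : ℝ) ^ ((3 : ℝ) / 2) := Real.rpow_le_rpow_of_exponent_le hn1 (by norm_num)
end
end

section
/- Let u : ℝⁿ → ℝ be convex, z ∈ ℝⁿ, h > 0, and let S_h^c(z) = {u < ℓ} be a centered section of u at z with height h, where ℓ is the defining affine function. Then h ≤ sup_{S_h^c(z)} (ℓ − u) ≤ (1 + n^{3/2}) h. -/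
open MeasureTheory Metric Set Filter Topology
open scoped RealInnerProductSpace ENNReal NNReal

noncomputable section
open scoped Classical

set_option maxHeartbeats 2000000 in
/-- **Height of a centered section.** (Lemma 2.9.)  If `S = {u < ℓ}` is a centered
section of a convex function `u` at `z` with height `h`, with defining affine function
`ℓ`, then `h ≤ sup_S (ℓ − u) ≤ (1 + n^{3/2}) h`. -/
theorem centered_section_sup_bound (n : ℕ) (u : E n → ℝ) (z : E n) (h : ℝ)
    (S : Set (E n)) (p : E n) (c : ℝ)
    (hu : ConvexOn ℝ Set.univ u) (hh : 0 < h)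
    (hS : IsCenteredSectionWith u z h S p c) :
    h ≤ sSup ((fun x => (⟪p, x⟫ + c) - u x) '' S) ∧
      sSup ((fun x => (⟪p, x⟫ + c) - u x) '' S) ≤ (1 + (n : ℝ) ^ ((3 : ℝ) / 2)) * h := by
  obtain ⟨hℓz, hSdef, hbd, hcm⟩ := hS
  set v : E n → ℝ := fun x => (⟪p, x⟫ + c) - u x with hvdef
  have hucont : Continuous u := continuousOn_univ.mp (hu.continuousOn isOpen_univ)
  have hℓcont : Continuous (fun x : E n => ⟪p, x⟫ + c) :=
    (continuous_const.inner continuous_id).add continuous_const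
  have hvcont : Continuous v := hℓcont.sub hucont
  have hSopen : IsOpen S := by rw [hSdef]; exact isOpen_lt hucont hℓcont
  have hzS : z ∈ S := by rw [hSdef]; simp only [Set.mem_setOf_eq, hℓz]; linarith
  have hvz : v z = h := by show (⟪p, z⟫ + c) - u z = h; rw [hℓz]; ring
  have hvpos : ∀ x ∈ S, 0 < v x := by
    intro x hx
    rw [hSdef] at hx
    have : u x < ⟪p, x⟫ + c := hx
    show 0 < (⟪p, x⟫ + c) - u x
    linarith
  have hconv : Convex ℝ S := by
    have hcc : ConcaveOn ℝ (univ : Set (E n)) (fun x : E n => ⟪p, x⟫ + c) := by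
      refine ⟨convex_univ, fun x _ y _ a b ha hb hab => le_of_eq ?_⟩
      simp only [smul_eq_mul, inner_add_right, real_inner_smul_right]
      linear_combination c * hab
    have hconvf : ConvexOn ℝ (univ : Set (E n)) (fun x => u x - (⟪p, x⟫ + c)) := hu.sub hcc
    have hrw : S = {x ∈ (univ : Set (E n)) | u x - (⟪p, x⟫ + c) < 0} := by
      rw [hSdef]; ext x; simp [sub_neg]
    rw [hrw]; exact hconvf.convex_lt 0
  have hKc : IsCompact (closure S) := hbd.isCompact_closure
  have hbdd : BddAbove (v '' S) :=
    (hKc.bddAbove_image hvcont.continuousOn).mono (image_mono subset_closure)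
  have hne : (v '' S).Nonempty := ⟨v z, mem_image_of_mem _ hzS⟩
  have h_low : h ≤ sSup (v '' S) := le_csSup hbdd ⟨z, hzS, hvz⟩
  refine ⟨h_low, ?_⟩
  set M := sSup (v '' S) with hMdef
  rcases Nat.eq_zero_or_pos n with hn | hn
  · subst hn
    haveI : Subsingleton (E 0) := ⟨fun a b => by ext i; exact Fin.elim0 i⟩
    have himg : v '' S = {h} := by
      apply Subset.antisymm
      · rintro _ ⟨x, hx, rfl⟩
        rw [Subsingleton.elim x z, hvz]; exact rfl
      · rintro y hy
        rw [mem_singleton_iff] at hy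
        exact ⟨z, hzS, by rw [hvz, hy]⟩
    have : M = h := by rw [hMdef, himg, csSup_singleton]
    rw [this]
    have : ((0 : ℕ) : ℝ) ^ ((3 : ℝ) / 2) = 0 := by
      rw [Nat.cast_zero]; exact Real.zero_rpow (by norm_num)
    rw [this]; linarith
  -- main case n ≥ 1
  have hSm : MeasurableSet S := hSopen.measurableSet
  have hV0 : volume S ≠ 0 := (hSopen.measure_pos volume ⟨z, hzS⟩).ne'
  have hVtop : volume S ≠ ⊤ := hbd.measure_lt_top.ne
  set V := (volume S).toReal with hVdef
  have hVpos : 0 < V := ENNReal.toReal_pos hV0 hVtop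
  obtain ⟨C, hC⟩ := hKc.exists_bound_of_continuousOn hvcont.continuousOn
  have hIntOf : ∀ f : E n → ℝ, Continuous f → IntegrableOn f S := by
    intro f hf
    obtain ⟨D, hD⟩ := hKc.exists_bound_of_continuousOn hf.continuousOn
    exact Measure.integrableOn_of_bounded hVtop hf.aestronglyMeasurable
      ((ae_restrict_iff' hSm).mpr (ae_of_all _ fun x hx => hD x (subset_closure hx)))
  have hvInt : IntegrableOn v S := hIntOf v hvcont
  have huInt : IntegrableOn u S := hIntOf u hucont
  have hidInt : IntegrableOn (fun x : E n => x) S := by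
    obtain ⟨D, hD⟩ := hKc.exists_bound_of_continuousOn continuousOn_id
    exact Measure.integrableOn_of_bounded hVtop aestronglyMeasurable_id
      ((ae_restrict_iff' hSm).mpr (ae_of_all _ fun x hx => hD x (subset_closure hx)))
  haveI hfin : IsFiniteMeasure (volume.restrict S) :=
    ⟨by rw [Measure.restrict_apply_univ]; exact hVtop.lt_top⟩
  haveI : NeZero (volume.restrict S) := ⟨by simpa [Measure.restrict_eq_zero] using hV0⟩
  have havg : (⨍ x in S, x ∂volume) = z := by
    rw [average_eq, measureReal_restrict_apply_univ]; exact hcm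
  have hjensen : u z ≤ ⨍ x in S, u x ∂volume := by
    have := hu.map_average_le hucont.continuousOn isClosed_univ
      (ae_of_all _ fun x => mem_univ (id x)) hidInt (by simpa [Function.comp] using huInt.integrable)
    simpa [havg] using this
  have hintx : (∫ x in S, (x : E n)) = V • z := by
    rw [← hcm, centerOfMass, ← hVdef, smul_smul, mul_inv_cancel₀ hVpos.ne', one_smul]
  have hIle : (∫ x in S, v x) ≤ h * V := by
    have hpInt : IntegrableOn (fun x : E n => ⟪p, x⟫) S :=
      hIntOf _ (continuous_const.inner continuous_id)
    have h2 : (∫ x in S, (⟪p, x⟫ + c)) = V * (u z + h) := by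
      rw [integral_add hpInt (integrable_const c), integral_inner hidInt p, hintx,
        real_inner_smul_right, integral_const, measureReal_restrict_apply_univ, measureReal_def, ← hVdef,
        smul_eq_mul, ← hℓz]
      ring
    have h3 : V * u z ≤ ∫ x in S, u x := by
      have := hjensen
      rw [average_eq, measureReal_restrict_apply_univ, measureReal_def, ← hVdef, smul_eq_mul] at this
      have h4 : V * u z ≤ V * (V⁻¹ * ∫ x in S, u x) :=
        mul_le_mul_of_nonneg_left this hVpos.le
      rwa [← mul_assoc, mul_inv_cancel₀ hVpos.ne', one_mul] at h4
    have h5 : (∫ x in S, v x) = (∫ x in S, (⟪p, x⟫ + c)) - ∫ x in S, u x :=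
      integral_sub (hpInt.add (integrable_const c)) huInt
    rw [h5, h2]
    nlinarith
  set I := ∫ x in S, v x with hIdef
  have key : ∀ t : ℝ, t ∈ Ioo (0:ℝ) 1 →
      M * t ^ n ≤ (∑ k ∈ Finset.range (n + 1), t ^ k) * h := by
    intro t ht
    obtain ⟨ht0, ht1⟩ := ht
    have h1t : 0 < 1 - t := by linarith
    have htn0 : (0:ℝ) < t ^ n := pow_pos ht0 n
    have hcoef : 0 < (t ^ n)⁻¹ - t := by
      have hlt : t ^ n < 1 := pow_lt_one₀ ht0.le ht1 (by omega)
      have : 1 < (t ^ n)⁻¹ := (one_lt_inv₀ htn0).mpr hlt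
      linarith
    have step : ∀ ε : ℝ, 0 < ε → (1 - t) * (M - ε) ≤ ((t ^ n)⁻¹ - t) * h := by
      intro ε hε
      obtain ⟨y, ⟨x₀, hx₀S, rfl⟩, hx₀⟩ :=
        exists_lt_of_lt_csSup hne (show M - ε < M by linarith)
      set ψ : E n → E n := fun x => x₀ + t • (x - x₀) with hψdef
      have hψcomb : ∀ x : E n, ψ x = (1 - t) • x₀ + t • x := by
        intro x
        show x₀ + t • (x - x₀) = (1 - t) • x₀ + t • x
        rw [smul_sub, sub_smul, one_smul]
        abel
      have hψcont : Continuous ψ :=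
        continuous_const.add ((continuous_id.sub continuous_const).const_smul t)
      have hψmem : ∀ x ∈ S, ψ x ∈ S := by
        intro x hx
        rw [hψcomb]
        exact hconv hx₀S hx (by linarith) ht0.le (by ring)
      have hpt : ∀ x ∈ S, (1 - t) * (M - ε) + t * v x ≤ v (ψ x) := by
        intro x hx
        have hu2 := hu.2 (mem_univ x₀) (mem_univ x)
          (show (0:ℝ) ≤ 1 - t by linarith) ht0.le (by ring)
        rw [smul_eq_mul, smul_eq_mul] at hu2
        have hl : ⟪p, (1 - t) • x₀ + t • x⟫ = (1 - t) * ⟪p, x₀⟫ + t * ⟪p, x⟫ := by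
          rw [inner_add_right, real_inner_smul_right, real_inner_smul_right]
        have hcv : (1 - t) * v x₀ + t * v x ≤ v (ψ x) := by
          rw [hψcomb]
          show (1 - t) * v x₀ + t * v x ≤ (⟪p, (1-t) • x₀ + t • x⟫ + c) - u ((1-t) • x₀ + t • x)
          rw [hl]
          have hv1 : v x₀ = (⟪p, x₀⟫ + c) - u x₀ := rfl
          have hv2 : v x = (⟪p, x⟫ + c) - u x := rfl
          rw [hv1, hv2]
          nlinarith [hu2]
        nlinarith [hvpos x hx, hx₀, hcv]
      -- the dilated preimage is bounded
      obtain ⟨R, hR⟩ := (Metric.isBounded_iff_subset_closedBall x₀).mp hbd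
      have hpre : ψ ⁻¹' S ⊆ Metric.closedBall x₀ (t⁻¹ * R) := by
        intro x hx
        have h1 : ψ x ∈ Metric.closedBall x₀ R := hR hx
        rw [Metric.mem_closedBall] at h1 ⊢
        have h2 : dist (ψ x) x₀ = t * dist x x₀ := by
          rw [hψdef]
          simp only [dist_eq_norm]
          rw [show x₀ + t • (x - x₀) - x₀ = t • (x - x₀) by abel, norm_smul,
            Real.norm_eq_abs, abs_of_pos ht0]
        rw [h2] at h1
        calc dist x x₀ = t⁻¹ * (t * dist x x₀) := by
              rw [← mul_assoc, inv_mul_cancel₀ ht0.ne', one_mul]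
        _ ≤ t⁻¹ * R := by
              apply mul_le_mul_of_nonneg_left h1 (by positivity)
      have hpreM : MeasurableSet (ψ ⁻¹' S) := (hSopen.preimage hψcont).measurableSet
      have hpreV : volume (ψ ⁻¹' S) ≠ ⊤ :=
        ((Metric.isBounded_closedBall).subset hpre).measure_lt_top.ne
      set w : E n → ℝ := S.indicator v with hwdef
      have hw0 : ∀ x, 0 ≤ w x := by
        intro x
        rcases em (x ∈ S) with hx | hx
        · rw [hwdef, indicator_of_mem hx]; exact (hvpos x hx).le
        · rw [hwdef, indicator_of_notMem hx]
      have hwψ : ∀ x, w (ψ x) = (ψ ⁻¹' S).indicator (fun y => v (ψ y)) x := by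
        intro x
        rcases em (ψ x ∈ S) with hx | hx
        · rw [hwdef, indicator_of_mem hx, indicator_of_mem (by exact hx)]
        · rw [hwdef, indicator_of_notMem hx, indicator_of_notMem (by exact hx)]
      have hvψInt : IntegrableOn (fun x => v (ψ x)) (ψ ⁻¹' S) :=
        Measure.integrableOn_of_bounded hpreV (hvcont.comp hψcont).aestronglyMeasurable
          ((ae_restrict_iff' hpreM).mpr (ae_of_all _ fun x hx =>
            hC (ψ x) (subset_closure hx)))
      have hwψInt : Integrable (fun x => w (ψ x)) volume := by
        have := hvψInt.integrable_indicator hpreM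
        apply this.congr
        exact ae_of_all _ fun x => (hwψ x).symm
      have hvψSInt : IntegrableOn (fun x => v (ψ x)) S := hIntOf _ (hvcont.comp hψcont)
      have EqA : (∫ x in S, v (ψ x)) = ∫ x in S, w (ψ x) := by
        apply setIntegral_congr_fun hSm
        intro x hx
        show v (ψ x) = w (ψ x)
        rw [hwdef, indicator_of_mem (hψmem x hx)]
      have leB : (∫ x in S, w (ψ x)) ≤ ∫ x, w (ψ x) :=
        setIntegral_le_integral hwψInt (ae_of_all _ fun x => hw0 (ψ x))
      have EqC : (∫ x, w (ψ x)) = (t ^ n)⁻¹ * I := by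
        have hψeq : ∀ x : E n, ψ x = (x₀ - t • x₀) + t • x := by
          intro x
          show x₀ + t • (x - x₀) = (x₀ - t • x₀) + t • x
          rw [smul_sub]; abel
        have step1 : (∫ x, w (ψ x)) = ∫ x, (fun y => w ((x₀ - t • x₀) + y)) (t • x) := by
          congr 1; ext x; rw [hψeq x]
        rw [step1, Measure.integral_comp_smul volume (fun y => w ((x₀ - t • x₀) + y)) t,
          integral_add_left_eq_self w (x₀ - t • x₀)]
        have : |((t : ℝ) ^ Module.finrank ℝ (E n))⁻¹| = (t ^ n)⁻¹ := by
          rw [finrank_euclideanSpace_fin, abs_of_pos (by positivity)]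
        rw [this, smul_eq_mul, hwdef, integral_indicator hSm, ← hIdef]
      have leL : (1 - t) * (M - ε) * V + t * I ≤ ∫ x in S, v (ψ x) := by
        have hmono : (∫ x in S, ((1 - t) * (M - ε) + t * v x)) ≤ ∫ x in S, v (ψ x) :=
          setIntegral_mono_on ((integrable_const _).add (hvInt.const_mul t)) hvψSInt hSm hpt
        rwa [integral_add (integrable_const _) (hvInt.const_mul t), integral_const,
          measureReal_restrict_apply_univ, measureReal_def, ← hVdef, smul_eq_mul, integral_const_mul,
          ← hIdef, mul_comm V] at hmono
      have hfinal : (1 - t) * (M - ε) * V + t * I ≤ (t ^ n)⁻¹ * I := by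
        calc (1 - t) * (M - ε) * V + t * I ≤ ∫ x in S, v (ψ x) := leL
        _ = ∫ x in S, w (ψ x) := EqA
        _ ≤ ∫ x, w (ψ x) := leB
        _ = (t ^ n)⁻¹ * I := EqC
      -- divide through by V
      have hstep1 : (1 - t) * (M - ε) * V ≤ ((t ^ n)⁻¹ - t) * I := by linarith
      have hstep2 : ((t ^ n)⁻¹ - t) * I ≤ ((t ^ n)⁻¹ - t) * (h * V) :=
        mul_le_mul_of_nonneg_left hIle hcoef.le
      have hstep3 : (1 - t) * (M - ε) * V ≤ (((t ^ n)⁻¹ - t) * h) * V := by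
        calc (1 - t) * (M - ε) * V ≤ ((t ^ n)⁻¹ - t) * (h * V) := hstep1.trans hstep2
        _ = (((t ^ n)⁻¹ - t) * h) * V := by ring
      exact le_of_mul_le_mul_right hstep3 hVpos
    have h2 : (1 - t) * M ≤ ((t ^ n)⁻¹ - t) * h := by
      by_contra hcon
      push_neg at hcon
      set δ := (1 - t) * M - ((t ^ n)⁻¹ - t) * h with hδdef
      have hδ : 0 < δ := by rw [hδdef]; linarith
      have hst := step (δ / (2 * (1 - t))) (by positivity)
      have expand : (1 - t) * (M - δ / (2 * (1 - t))) = (1 - t) * M - δ / 2 := by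
        field_simp
      rw [expand] at hst
      rw [hδdef] at hδ hst
      linarith
    have hgeom : (1 - t) * (∑ k ∈ Finset.range (n + 1), t ^ k) = 1 - t ^ (n + 1) := by
      have hg := geom_sum_mul t (n + 1)
      nlinarith [hg]
    have h3 : (1 - t) * M * t ^ n ≤ ((t ^ n)⁻¹ - t) * h * t ^ n :=
      mul_le_mul_of_nonneg_right h2 htn0.le
    have h4 : ((t ^ n)⁻¹ - t) * h * t ^ n = (1 - t ^ (n + 1)) * h := by
      have hc : (t ^ n)⁻¹ * t ^ n = 1 := inv_mul_cancel₀ htn0.ne'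
      linear_combination h * hc
    rw [h4, ← hgeom] at h3
    have h5 : (1 - t) * (M * t ^ n) ≤ (1 - t) * ((∑ k ∈ Finset.range (n + 1), t ^ k) * h) := by
      nlinarith [h3]
    exact le_of_mul_le_mul_left h5 h1t
  -- take the limit t → 1⁻
  have hlim1 : Tendsto (fun t : ℝ => M * t ^ n) (𝓝[<] (1:ℝ)) (𝓝 M) := by
    have hc : Continuous fun t : ℝ => M * t ^ n := continuous_const.mul (continuous_pow n)
    have h0 : Tendsto (fun t : ℝ => M * t ^ n) (𝓝[<] (1:ℝ)) (𝓝 (M * 1 ^ n)) :=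
      (hc.tendsto 1).mono_left nhdsWithin_le_nhds
    simpa using h0
  have hlim2 : Tendsto (fun t : ℝ => (∑ k ∈ Finset.range (n + 1), t ^ k) * h)
      (𝓝[<] (1:ℝ)) (𝓝 (((n : ℝ) + 1) * h)) := by
    have hc : Continuous fun t : ℝ => (∑ k ∈ Finset.range (n + 1), t ^ k) * h :=
      (continuous_finset_sum _ fun k _ => continuous_pow k).mul continuous_const
    have h0 : Tendsto (fun t : ℝ => (∑ k ∈ Finset.range (n + 1), t ^ k) * h) (𝓝[<] (1:ℝ))
        (𝓝 ((∑ k ∈ Finset.range (n + 1), (1:ℝ) ^ k) * h)) :=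
      (hc.tendsto 1).mono_left nhdsWithin_le_nhds
    have hval : (∑ k ∈ Finset.range (n + 1), (1:ℝ) ^ k) * h = ((n : ℝ) + 1) * h := by
      simp [Finset.sum_const, Finset.card_range]
    rwa [hval] at h0
  have hev : ∀ᶠ t in 𝓝[<] (1:ℝ),
      M * t ^ n ≤ (∑ k ∈ Finset.range (n + 1), t ^ k) * h := by
    filter_upwards [Ioo_mem_nhdsLT (show (0:ℝ) < 1 by norm_num)] with t ht
    exact key t ht
  have hM1 : M ≤ ((n : ℝ) + 1) * h := le_of_tendsto_of_tendsto hlim1 hlim2 hev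
  have hnn : (n : ℝ) ≤ (n : ℝ) ^ ((3 : ℝ) / 2) := by
    calc (n : ℝ) = (n : ℝ) ^ (1 : ℝ) := (Real.rpow_one _).symm
    _ ≤ (n : ℝ) ^ ((3 : ℝ) / 2) :=
        Real.rpow_le_rpow_of_exponent_le (by exact_mod_cast hn) (by norm_num)
  calc M ≤ ((n : ℝ) + 1) * h := hM1
  _ ≤ (1 + (n : ℝ) ^ ((3 : ℝ) / 2)) * h := by nlinarith [mul_le_mul_of_nonneg_right hnn hh.le]
end
end
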